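/- Conversely to the previous statement: if G1 and G2 are isomorphic finite graphs on n vertices, then the graph G' = G1' ⊔ G2' (where G_i' adds a universal vertex u_i and pendant leaf v_i to G_i and subdivides all edges once) admits an involutive automorphism f such that e ∩ f(e) = ∅ for every edge e of G'. -/
import Mathlib


open SimpleGraph Finset

/-- `G` together with a new universal vertex `u = Sum.inr false` and a pendant leaf
`v = Sum.inr true` attached to `u`. -/
def augment {V : Type*} (G : SimpleGraph V) : SimpleGraph (V ⊕ Bool) :=
  SimpleGraph.fromRel fun a b =>
    match a, b with
    | Sum.inl x, Sum.inl y => G.Adj x y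
    | Sum.inl _, Sum.inr b => b = false
    | Sum.inr _, Sum.inr _ => True
    | _, _ => False

/-- The subdivision of `H`: every edge is replaced by a path of length 2 through a new
vertex indexed by that edge. -/
def subdiv {W : Type*} (H : SimpleGraph W) : SimpleGraph (W ⊕ H.edgeSet) :=
  SimpleGraph.fromRel fun a b =>
    match a, b with
    | Sum.inl w, Sum.inr e => w ∈ (e : Sym2 W)
    | _, _ => False


def augIso {V₁ V₂ : Type*} {G₁ : SimpleGraph V₁} {G₂ : SimpleGraph V₂}
    (φ : G₁ ≃g G₂) : augment G₁ ≃g augment G₂ where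
  toEquiv := Equiv.sumCongr φ.toEquiv (Equiv.refl Bool)
  map_rel_iff' := by
    intro a b
    cases a <;> cases b <;>
      simp [augment, SimpleGraph.fromRel_adj, φ.map_rel_iff, φ.toEquiv.injective.ne_iff]

def subdivIso {W₁ W₂ : Type*} {H₁ : SimpleGraph W₁} {H₂ : SimpleGraph W₂}
    (ψ : H₁ ≃g H₂) : subdiv H₁ ≃g subdiv H₂ where
  toEquiv := Equiv.sumCongr ψ.toEquiv ψ.mapEdgeSet
  map_rel_iff' := by
    intro a b
    have key : ∀ (w : W₁) (e : H₁.edgeSet),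
        ψ w ∈ ((ψ.mapEdgeSet e : H₂.edgeSet) : Sym2 W₂) ↔ w ∈ (e : Sym2 W₁) := by
      intro w e
      simp only [Iso.mapEdgeSet, Hom.mapEdgeSet, Equiv.coe_fn_mk, Sym2.mem_map]
      constructor
      · rintro ⟨y, hy, h⟩
        rwa [ψ.toEquiv.injective h] at hy
      · exact fun h => ⟨w, h, rfl⟩
    cases a <;> cases b <;>
      simp [subdiv, SimpleGraph.fromRel_adj, key]

def sumSwapIso {α β : Type*} {G : SimpleGraph α} {H : SimpleGraph β}
    (ι : G ≃g H) : (G ⊕g H) ≃g (G ⊕g H) where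
  toEquiv := (Equiv.sumCongr ι.toEquiv ι.symm.toEquiv).trans (Equiv.sumComm β α)
  map_rel_iff' := by
    intro a b
    cases a <;> cases b <;>
      simp [ι.map_rel_iff, ι.symm.map_rel_iff]

/-- If `G₁` and `G₂` are isomorphic finite graphs on `n` vertices, then
`G' = subdiv (augment G₁) ⊕g subdiv (augment G₂)` admits an involutive automorphism `f`
mapping every edge to a vertex-disjoint edge. -/
theorem stmt_17 {V₁ V₂ : Type*} [Fintype V₁] [Fintype V₂]
    (G₁ : SimpleGraph V₁) (G₂ : SimpleGraph V₂)
    (hcard : Fintype.card V₁ = Fintype.card V₂)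
    (hiso : Nonempty (G₁ ≃g G₂)) :
    ∃ f : (subdiv (augment G₁) ⊕g subdiv (augment G₂)) ≃g
          (subdiv (augment G₁) ⊕g subdiv (augment G₂)),
      (∀ x, f (f x) = x) ∧
      (∀ a b, (subdiv (augment G₁) ⊕g subdiv (augment G₂)).Adj a b →
        f a ≠ a ∧ f a ≠ b ∧ f b ≠ a ∧ f b ≠ b) := by
  obtain ⟨φ⟩ := hiso
  set ι := subdivIso (augIso φ)
  refine ⟨sumSwapIso ι, ?_, ?_⟩
  · intro x
    cases x <;> simp [sumSwapIso]
  · intro a b hab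
    cases a <;> cases b <;> simp_all [sumSwapIso]
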